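/- arXiv:1609.00782 — 2 statements merged into one kernel-verified Lean document; each statement's English description precedes it below -/
import Mathlib

section
/- For K ≤ 0, N > 1, θ ∈ [0,D] and λ ∈ (0,1), the distortion coefficient τ_{K,N}^{(1-λ)}(θ) := (1-λ)^{1/N} · (σ_{K,N-1}^{(1-λ)}(θ))^{(N-1)/N} satisfies τ_{K,N}^{(1-λ)}(θ) ≥ (1-λ) · exp(-θλ√((N-1)K⁻)/N), where K⁻ = max{-K, 0}. -/
/-- The distortion coefficient `σ_{K,N}^{(t)}(θ)` for nonpositive `K`
(interpreted as `t` when `K = 0` or `θ = 0`). -/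
noncomputable def sigmaC (K N t θ : ℝ) : ℝ :=
  if K = 0 ∨ θ = 0 then t
  else if K < 0 then
    Real.sinh (t * θ * Real.sqrt (-K / N)) / Real.sinh (θ * Real.sqrt (-K / N))
  else Real.sin (t * θ * Real.sqrt (K / N)) / Real.sin (θ * Real.sqrt (K / N))

lemma key_sinh (t a : ℝ) (ht : 0 < t) (ht1 : t < 1) (ha : 0 < a) :
    t * Real.exp (-((1-t)*a)) * Real.sinh a ≤ Real.sinh (t*a) := by
  have hAM := Real.geom_mean_le_arith_mean2_weighted (by linarith : (0:ℝ) ≤ 1-t) ht.le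
    (Real.exp_pos (t*a)).le (Real.exp_pos ((t-2)*a)).le (by ring)
  rw [← Real.exp_mul, ← Real.exp_mul, ← Real.exp_add] at hAM
  have hexp : t * a * (1 - t) + (t - 2) * a * t = -(t*a) := by ring
  rw [hexp] at hAM
  have e1 : Real.exp (-((1-t)*a)) * Real.exp a = Real.exp (t*a) := by
    rw [← Real.exp_add]; ring_nf
  have e2 : Real.exp (-((1-t)*a)) * Real.exp (-a) = Real.exp ((t-2)*a) := by
    rw [← Real.exp_add]; ring_nf
  have hrw : t * Real.exp (-((1-t)*a)) * Real.sinh a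
      = t * (Real.exp (t*a) - Real.exp ((t-2)*a)) / 2 := by
    rw [Real.sinh_eq, ← e1, ← e2]; ring
  rw [hrw, Real.sinh_eq]
  linarith

/-- For `K ≤ 0`, `N > 1`, `θ ∈ [0,D]`, `λ ∈ (0,1)`:
`τ_{K,N}^{(1-λ)}(θ) = (1-λ)^{1/N} σ_{K,N-1}^{(1-λ)}(θ)^{(N-1)/N}
  ≥ (1-λ) exp(-θλ√((N-1)K⁻)/N)`. -/
theorem stmt2 (K N θ D lam : ℝ) (hK : K ≤ 0) (hN : 1 < N) (hθ : θ ∈ Set.Icc 0 D)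
    (hl : lam ∈ Set.Ioo (0:ℝ) 1) :
    (1 - lam) ^ ((1:ℝ)/N) * sigmaC K (N-1) (1-lam) θ ^ ((N-1)/N)
      ≥ (1 - lam) * Real.exp (-(θ * lam * Real.sqrt ((N-1) * max (-K) 0)) / N) := by
  obtain ⟨hθ0, _⟩ := hθ
  obtain ⟨hl0, hl1⟩ := hl
  have ht : (0:ℝ) < 1 - lam := by linarith
  have hN' : (0:ℝ) < N - 1 := by linarith
  have hNpos : (0:ℝ) < N := by linarith
  have hpow : (1-lam) ^ ((1:ℝ)/N) * (1-lam) ^ ((N-1)/N) = 1 - lam := by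
    rw [← Real.rpow_add ht, show (1:ℝ)/N + (N-1)/N = 1 by field_simp; ring, Real.rpow_one]
  by_cases hc : K = 0 ∨ θ = 0
  · rw [sigmaC, if_pos hc]
    have harg : -(θ * lam * Real.sqrt ((N-1) * max (-K) 0)) / N = 0 := by
      rcases hc with h | h
      · simp [h]
      · simp [h]
    rw [harg, Real.exp_zero, mul_one, ge_iff_le, hpow]
  · push_neg at hc
    have hKneg : K < 0 := lt_of_le_of_ne hK hc.1
    have hθpos : 0 < θ := lt_of_le_of_ne hθ0 (Ne.symm hc.2)
    set a := θ * Real.sqrt (-K/(N-1)) with ha_def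
    have hsq : 0 < Real.sqrt (-K/(N-1)) :=
      Real.sqrt_pos.mpr (div_pos (by linarith) hN')
    have ha : 0 < a := mul_pos hθpos hsq
    have hsinh : 0 < Real.sinh a := Real.sinh_pos_iff.mpr ha
    have hσ : sigmaC K (N-1) (1-lam) θ = Real.sinh ((1-lam) * a) / Real.sinh a := by
      rw [sigmaC, if_neg (by push_neg; exact hc), if_pos hKneg, mul_assoc]
    have hbound : (1-lam) * Real.exp (-(lam*a)) ≤ sigmaC K (N-1) (1-lam) θ := by
      rw [hσ, le_div_iff₀ hsinh]
      have := key_sinh (1-lam) a ht (by linarith) ha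
      have h12 : (1 - (1-lam)) * a = lam * a := by ring
      rw [h12] at this
      exact this
    have hE : (0:ℝ) < (1-lam) * Real.exp (-(lam*a)) := mul_pos ht (Real.exp_pos _)
    have hmono : ((1-lam) * Real.exp (-(lam*a))) ^ ((N-1)/N)
        ≤ sigmaC K (N-1) (1-lam) θ ^ ((N-1)/N) :=
      Real.rpow_le_rpow hE.le hbound (by positivity)
    have hsplit : ((1-lam) * Real.exp (-(lam*a))) ^ ((N-1)/N)
        = (1-lam) ^ ((N-1)/N) * Real.exp (-(lam*a) * ((N-1)/N)) := by
      rw [Real.mul_rpow ht.le (Real.exp_pos _).le, ← Real.exp_mul]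
    have hmax : max (-K) 0 = -K := max_eq_left (by linarith)
    have hsqrt : Real.sqrt (-K/(N-1)) * (N-1) = Real.sqrt ((N-1) * (-K)) := by
      rw [show (N-1) * (-K) = (-K/(N-1)) * (N-1)^2 by field_simp,
        Real.sqrt_mul (div_nonneg (by linarith) hN'.le), Real.sqrt_sq hN'.le]
    have hexp : -(lam*a) * ((N-1)/N) = -(θ * lam * Real.sqrt ((N-1) * max (-K) 0)) / N := by
      rw [hmax, ← hsqrt, ha_def]; ring
    calc (1 - lam) * Real.exp (-(θ * lam * Real.sqrt ((N-1) * max (-K) 0)) / N)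
        = (1-lam) ^ ((1:ℝ)/N) * ((1-lam) ^ ((N-1)/N)
            * Real.exp (-(lam*a) * ((N-1)/N))) := by
          rw [hexp, ← mul_assoc, hpow]
      _ = (1-lam) ^ ((1:ℝ)/N) * ((1-lam) * Real.exp (-(lam*a))) ^ ((N-1)/N) := by
          rw [hsplit]
      _ ≤ (1-lam) ^ ((1:ℝ)/N) * sigmaC K (N-1) (1-lam) θ ^ ((N-1)/N) := by
          gcongr
end

section
/- Let Γ ⊂ X × X be a d²-cyclically monotone set in a geodesic metric space (X,d), and let γ¹, γ² be constant-speed geodesics with (γ¹₀, γ¹₁), (γ²₀, γ²₁) ∈ Γ and γ¹_τ = γ²_τ for some τ ∈ (0,1). Then the lengths of γ¹ and γ² are equal: d(γ¹₀, γ¹₁) = d(γ²₀, γ²₁). -/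
open scoped BigOperators

/-- A constant-speed geodesic parametrized on `[0,1]`. -/
def IsGeo {X : Type*} [MetricSpace X] (γ : ℝ → X) : Prop :=
  ∀ s ∈ Set.Icc (0:ℝ) 1, ∀ t ∈ Set.Icc (0:ℝ) 1,
    dist (γ s) (γ t) = |s - t| * dist (γ 0) (γ 1)

/-- `d²`-cyclical monotonicity of a set `Γ ⊆ X × X`. -/
def CyclMono {X : Type*} [MetricSpace X] (Γ : Set (X × X)) : Prop :=
  ∀ (n : ℕ) (p : Fin n → X × X), (∀ i, p i ∈ Γ) → ∀ σ : Equiv.Perm (Fin n),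
    ∑ i, dist (p i).1 (p i).2 ^ 2 ≤ ∑ i, dist (p i).1 (p (σ i)).2 ^ 2

/-- Two geodesics with endpoint pairs in a `d²`-cyclically monotone set which meet at a
common intermediate time `τ ∈ (0,1)` have the same length. -/
theorem stmt7 {X : Type*} [MetricSpace X]
    (hgeo : ∀ x y : X, ∃ γ : ℝ → X, IsGeo γ ∧ γ 0 = x ∧ γ 1 = y)
    (Γ : Set (X × X)) (hΓ : CyclMono Γ)
    (γ1 γ2 : ℝ → X) (h1 : IsGeo γ1) (h2 : IsGeo γ2)
    (hΓ1 : (γ1 0, γ1 1) ∈ Γ) (hΓ2 : (γ2 0, γ2 1) ∈ Γ)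
    (τ : ℝ) (hτ : τ ∈ Set.Ioo (0:ℝ) 1) (heq : γ1 τ = γ2 τ) :
    dist (γ1 0) (γ1 1) = dist (γ2 0) (γ2 1) := by
  obtain ⟨hτ0, hτ1⟩ := hτ
  have hτm : τ ∈ Set.Icc (0:ℝ) 1 := ⟨le_of_lt hτ0, le_of_lt hτ1⟩
  have h0m : (0:ℝ) ∈ Set.Icc (0:ℝ) 1 := ⟨le_refl _, zero_le_one⟩
  have h1m : (1:ℝ) ∈ Set.Icc (0:ℝ) 1 := ⟨zero_le_one, le_refl _⟩
  set ℓ1 := dist (γ1 0) (γ1 1)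
  set ℓ2 := dist (γ2 0) (γ2 1)
  have hℓ1 : dist (γ1 0) (γ1 τ) = τ * ℓ1 := by
    have := h1 0 h0m τ hτm
    rwa [abs_sub_comm, sub_zero, abs_of_pos hτ0] at this
  have hℓ1' : dist (γ1 τ) (γ1 1) = (1 - τ) * ℓ1 := by
    have := h1 τ hτm 1 h1m
    rwa [show |τ - 1| = 1 - τ by rw [abs_sub_comm, abs_of_pos (by linarith)]] at this
  have hℓ2 : dist (γ2 0) (γ2 τ) = τ * ℓ2 := by
    have := h2 0 h0m τ hτm
    rwa [abs_sub_comm, sub_zero, abs_of_pos hτ0] at this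
  have hℓ2' : dist (γ2 τ) (γ2 1) = (1 - τ) * ℓ2 := by
    have := h2 τ hτm 1 h1m
    rwa [show |τ - 1| = 1 - τ by rw [abs_sub_comm, abs_of_pos (by linarith)]] at this
  -- triangle inequalities
  have tri1 : dist (γ1 0) (γ2 1) ≤ τ * ℓ1 + (1 - τ) * ℓ2 := by
    calc dist (γ1 0) (γ2 1) ≤ dist (γ1 0) (γ1 τ) + dist (γ1 τ) (γ2 1) := dist_triangle _ _ _
    _ = τ * ℓ1 + (1 - τ) * ℓ2 := by rw [hℓ1, heq, hℓ2']
  have tri2 : dist (γ2 0) (γ1 1) ≤ τ * ℓ2 + (1 - τ) * ℓ1 := by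
    calc dist (γ2 0) (γ1 1) ≤ dist (γ2 0) (γ2 τ) + dist (γ2 τ) (γ1 1) := dist_triangle _ _ _
    _ = τ * ℓ2 + (1 - τ) * ℓ1 := by rw [hℓ2, ← heq, hℓ1']
  -- cyclical monotonicity with n = 2 and the swap permutation
  have key : ℓ1 ^ 2 + ℓ2 ^ 2 ≤ dist (γ1 0) (γ2 1) ^ 2 + dist (γ2 0) (γ1 1) ^ 2 := by
    have := hΓ 2 ![(γ1 0, γ1 1), (γ2 0, γ2 1)]
      (by intro i; fin_cases i <;> simpa) (Equiv.swap 0 1)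
    simpa [Fin.sum_univ_two, Equiv.swap_apply_left, Equiv.swap_apply_right] using this
  have hd1 : (0:ℝ) ≤ dist (γ1 0) (γ2 1) := dist_nonneg
  have hd2 : (0:ℝ) ≤ dist (γ2 0) (γ1 1) := dist_nonneg
  have hℓ1n : (0:ℝ) ≤ ℓ1 := dist_nonneg
  have hℓ2n : (0:ℝ) ≤ ℓ2 := dist_nonneg
  have sq1 : dist (γ1 0) (γ2 1) ^ 2 ≤ (τ * ℓ1 + (1 - τ) * ℓ2) ^ 2 :=
    pow_le_pow_left₀ hd1 tri1 2
  have sq2 : dist (γ2 0) (γ1 1) ^ 2 ≤ (τ * ℓ2 + (1 - τ) * ℓ1) ^ 2 :=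
    pow_le_pow_left₀ hd2 tri2 2
  have hpos : 0 < τ * (1 - τ) := mul_pos hτ0 (by linarith)
  have hkey2 : τ * (1 - τ) * (ℓ1 - ℓ2) ^ 2 ≤ 0 := by nlinarith
  have h0 : (ℓ1 - ℓ2) ^ 2 ≤ 0 := by
    by_contra h
    push_neg at h
    nlinarith
  have := sq_nonneg (ℓ1 - ℓ2)
  have : (ℓ1 - ℓ2) ^ 2 = 0 := le_antisymm h0 this
  have := pow_eq_zero_iff (n := 2) (by norm_num) |>.mp this
  linarith
end
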